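/- The ∧-discrete dispersive order ≼_∧ is not transitive: there exist finitely supported discrete distributions F, G, H with F ≼_∧ G and G ≼_∧ H but F ⋠_∧ H. -/

import Mathlib

/-- A purposive discrete distribution: support indexed by an interval of `ℤ`
with at least two elements, strictly increasing support points `x` and
positive probabilities `p` summing to one. -/
structure DiscDist where
  A : Set ℤ
  x : ℤ → ℝ
  p : ℤ → ℝ
  hA2 : ∃ a b, a ∈ A ∧ b ∈ A ∧ a ≠ b
  hAconn : ∀ a b c : ℤ, a ∈ A → c ∈ A → a ≤ b → b ≤ c → b ∈ A
  hmono : ∀ a b : ℤ, a ∈ A → b ∈ A → a < b → x a < x b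
  hpos : ∀ a ∈ A, 0 < p a
  hzero : ∀ a ∉ A, p a = 0
  hsummable : Summable p
  hsum : ∑' a, p a = 1

/-- Cumulative probability strictly below index `a`, i.e. `F(x_{a-1})`. -/
noncomputable def DiscDist.L (D : DiscDist) (a : ℤ) : ℝ :=
  ∑' i : ℤ, if i < a then D.p i else 0

/-- The relation `a ▷◁ b`: the jump intervals `(F(x_{a-1}), F(x_a))` and
`(G(y_{b-1}), G(y_b))` intersect. -/
def DRel (F G : DiscDist) (a b : ℤ) : Prop :=
  a ∈ F.A ∧ b ∈ G.A ∧
    max (F.L a) (G.L b) < min (F.L (a + 1)) (G.L (b + 1))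

/-- The ∧-discrete dispersive order `F ≼_∧ G`. -/
def discoA (F G : DiscDist) : Prop :=
  (∀ a b, DRel F G a b → G.p b ≤ F.p a) ∧
  (∀ a b, DRel F G a b → DRel F G (a - 1) (b - 1) →
    F.x a - F.x (a - 1) ≤ G.x b - G.x (b - 1))

/-- The ∨-discrete dispersive order `F ≼_∨ G`. -/
def discoO (F G : DiscDist) : Prop :=
  (∀ a b, DRel F G a b → G.p b ≤ F.p a) ∧
  (∀ a b, a ∈ F.A → a - 1 ∈ F.A → b ∈ G.A → b - 1 ∈ G.A →
    (DRel F G a b ∨ DRel F G (a - 1) (b - 1)) →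
    F.x a - F.x (a - 1) ≤ G.x b - G.x (b - 1))

/-- Cumulative distribution function of a discrete distribution. -/
noncomputable def DiscDist.cdf (D : DiscDist) (t : ℝ) : ℝ :=
  ∑' a : ℤ, if D.x a ≤ t then D.p a else 0

/-- F: atoms at 0, 2 with probabilities 1/2, 1/2. -/
noncomputable def FF : DiscDist where
  A := Set.Icc 0 1
  x := fun a => 2 * (a : ℝ)
  p := fun a => if a = 0 then 1/2 else if a = 1 then 1/2 else 0
  hA2 := ⟨0, 1, by simp, by simp, by norm_num⟩
  hAconn := by intro a b c ha hc hab hbc; simp [Set.mem_Icc] at *; omega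
  hmono := by
    intro a b _ _ hab
    show 2 * (a : ℝ) < 2 * (b : ℝ)
    have : (a : ℝ) < b := by exact_mod_cast hab
    linarith
  hpos := by
    intro a ha
    simp only [Set.mem_Icc] at ha
    have : a = 0 ∨ a = 1 := by omega
    rcases this with h | h <;> simp [h]
  hzero := by
    intro a ha
    simp only [Set.mem_Icc] at ha
    have h0 : a ≠ 0 := by intro h; exact ha (by omega)
    have h1 : a ≠ 1 := by intro h; exact ha (by omega)
    simp [h0, h1]
  hsummable := summable_of_ne_finset_zero (s := {0, 1}) (by
    intro b hb
    simp only [Finset.mem_insert, Finset.mem_singleton, not_or] at hb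
    simp [hb.1, hb.2])
  hsum := by
    rw [tsum_eq_sum (s := ({0, 1} : Finset ℤ)) (by
      intro b hb
      simp only [Finset.mem_insert, Finset.mem_singleton, not_or] at hb
      simp [hb.1, hb.2])]
    norm_num

/-- G: atoms at 0, 2, 4 with probabilities 1/4, 1/2, 1/4. -/
noncomputable def GG : DiscDist where
  A := Set.Icc 0 2
  x := fun a => 2 * (a : ℝ)
  p := fun a => if a = 0 then 1/4 else if a = 1 then 1/2 else if a = 2 then 1/4 else 0
  hA2 := ⟨0, 1, by simp, by simp, by norm_num⟩
  hAconn := by intro a b c ha hc hab hbc; simp [Set.mem_Icc] at *; omega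
  hmono := by
    intro a b _ _ hab
    show 2 * (a : ℝ) < 2 * (b : ℝ)
    have : (a : ℝ) < b := by exact_mod_cast hab
    linarith
  hpos := by
    intro a ha
    simp only [Set.mem_Icc] at ha
    have : a = 0 ∨ a = 1 ∨ a = 2 := by omega
    rcases this with h | h | h <;> simp [h]
  hzero := by
    intro a ha
    simp only [Set.mem_Icc] at ha
    have h0 : a ≠ 0 := by intro h; exact ha (by omega)
    have h1 : a ≠ 1 := by intro h; exact ha (by omega)
    have h2 : a ≠ 2 := by intro h; exact ha (by omega)
    simp [h0, h1, h2]
  hsummable := summable_of_ne_finset_zero (s := {0, 1, 2}) (by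
    intro b hb
    simp only [Finset.mem_insert, Finset.mem_singleton, not_or] at hb
    simp [hb.1, hb.2.1, hb.2.2])
  hsum := by
    rw [tsum_eq_sum (s := ({0, 1, 2} : Finset ℤ)) (by
      intro b hb
      simp only [Finset.mem_insert, Finset.mem_singleton, not_or] at hb
      simp [hb.1, hb.2.1, hb.2.2])]
    norm_num

/-- H: atoms at 0, 2, 3, 5 with probabilities 1/4 each. -/
noncomputable def HH : DiscDist where
  A := Set.Icc 0 3
  x := fun a => if a ≤ 0 then 0 else if a = 1 then 2 else if a = 2 then 3 else 5
  p := fun a => if 0 ≤ a ∧ a ≤ 3 then 1/4 else 0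
  hA2 := ⟨0, 1, by simp, by simp [Set.mem_Icc], by norm_num⟩
  hAconn := by intro a b c ha hc hab hbc; simp [Set.mem_Icc] at *; omega
  hmono := by
    intro a b ha hb hab
    simp only [Set.mem_Icc] at ha hb
    have h1 : a = 0 ∨ a = 1 ∨ a = 2 ∨ a = 3 := by omega
    have h2 : b = 0 ∨ b = 1 ∨ b = 2 ∨ b = 3 := by omega
    rcases h1 with h | h | h | h <;> rcases h2 with h' | h' | h' | h' <;>
      subst h <;> subst h' <;> revert hab <;> norm_num
  hpos := by
    intro a ha
    simp only [Set.mem_Icc] at ha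
    simp [ha.1, ha.2]
  hzero := by
    intro a ha
    simp only [Set.mem_Icc] at ha
    simp only [ite_eq_right_iff]
    intro h; exact absurd h ha
  hsummable := summable_of_ne_finset_zero (s := {0, 1, 2, 3}) (by
    intro b hb
    simp only [Finset.mem_insert, Finset.mem_singleton, not_or] at hb
    have : ¬ (0 ≤ b ∧ b ≤ 3) := by omega
    simp [this])
  hsum := by
    rw [tsum_eq_sum (s := ({0, 1, 2, 3} : Finset ℤ)) (by
      intro b hb
      simp only [Finset.mem_insert, Finset.mem_singleton, not_or] at hb
      have : ¬ (0 ≤ b ∧ b ≤ 3) := by omega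
      simp [this])]
    norm_num

lemma LFF (a : ℤ) : FF.L a
    = (if 0 < a then (1:ℝ)/2 else 0) + (if 1 < a then (1:ℝ)/2 else 0) := by
  unfold DiscDist.L
  rw [tsum_eq_sum (s := ({0, 1} : Finset ℤ)) (by
    intro b hb
    simp only [Finset.mem_insert, Finset.mem_singleton, not_or] at hb
    have : FF.p b = 0 := by simp [FF, hb.1, hb.2]
    simp [this])]
  rw [Finset.sum_pair (by norm_num : (0:ℤ) ≠ 1)]
  have h0 : FF.p 0 = 1/2 := by simp [FF]
  have h1 : FF.p 1 = 1/2 := by simp [FF]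
  rw [h0, h1]

lemma LGG (a : ℤ) : GG.L a
    = (if 0 < a then (1:ℝ)/4 else 0) + ((if 1 < a then (1:ℝ)/2 else 0)
      + (if 2 < a then (1:ℝ)/4 else 0)) := by
  unfold DiscDist.L
  rw [tsum_eq_sum (s := ({0, 1, 2} : Finset ℤ)) (by
    intro b hb
    simp only [Finset.mem_insert, Finset.mem_singleton, not_or] at hb
    have : GG.p b = 0 := by simp [GG, hb.1, hb.2.1, hb.2.2]
    simp [this])]
  rw [show ({0, 1, 2} : Finset ℤ) = insert 0 {1, 2} from rfl,
    Finset.sum_insert (by norm_num), Finset.sum_pair (by norm_num : (1:ℤ) ≠ 2)]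
  have h0 : GG.p 0 = 1/4 := by simp [GG]
  have h1 : GG.p 1 = 1/2 := by simp [GG]
  have h2 : GG.p 2 = 1/4 := by simp [GG]
  rw [h0, h1, h2]

lemma LHH (a : ℤ) : HH.L a
    = (if 0 < a then (1:ℝ)/4 else 0) + ((if 1 < a then (1:ℝ)/4 else 0)
      + ((if 2 < a then (1:ℝ)/4 else 0) + (if 3 < a then (1:ℝ)/4 else 0))) := by
  unfold DiscDist.L
  rw [tsum_eq_sum (s := ({0, 1, 2, 3} : Finset ℤ)) (by
    intro b hb
    simp only [Finset.mem_insert, Finset.mem_singleton, not_or] at hb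
    have : HH.p b = 0 := by
      have : ¬ (0 ≤ b ∧ b ≤ 3) := by omega
      simp [HH, this]
    simp [this])]
  rw [show ({0, 1, 2, 3} : Finset ℤ) = insert 0 (insert 1 {2, 3}) from rfl,
    Finset.sum_insert (by norm_num), Finset.sum_insert (by norm_num),
    Finset.sum_pair (by norm_num : (2:ℤ) ≠ 3)]
  have h0 : HH.p 0 = 1/4 := by norm_num [HH]
  have h1 : HH.p 1 = 1/4 := by norm_num [HH]
  have h2 : HH.p 2 = 1/4 := by norm_num [HH]
  have h3 : HH.p 3 = 1/4 := by norm_num [HH]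
  rw [h0, h1, h2, h3]

lemma aux_FG : discoA FF GG := by
  constructor
  · intro a b hd
    obtain ⟨ha, hb, hlt⟩ := hd
    have ha' : 0 ≤ a ∧ a ≤ 1 := by simpa [FF, Set.mem_Icc] using ha
    have hb' : 0 ≤ b ∧ b ≤ 2 := by simpa [GG, Set.mem_Icc] using hb
    simp only [LFF, LGG] at hlt
    have h1 : a = 0 ∨ a = 1 := by omega
    have h2 : b = 0 ∨ b = 1 ∨ b = 2 := by omega
    rcases h1 with h | h <;> rcases h2 with h' | h' | h' <;> subst h <;> subst h' <;>
      revert hlt <;> norm_num [FF, GG]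
  · intro a b hd hd'
    obtain ⟨ha, hb, hlt⟩ := hd
    obtain ⟨ha2, hb2, hlt2⟩ := hd'
    have ha' : 0 ≤ a ∧ a ≤ 1 := by simpa [FF, Set.mem_Icc] using ha
    have ha2' : 0 ≤ a - 1 ∧ a - 1 ≤ 1 := by simpa [FF, Set.mem_Icc] using ha2
    have hb' : 0 ≤ b ∧ b ≤ 2 := by simpa [GG, Set.mem_Icc] using hb
    have hb2' : 0 ≤ b - 1 ∧ b - 1 ≤ 2 := by simpa [GG, Set.mem_Icc] using hb2
    simp only [LFF, LGG] at hlt hlt2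
    have h1 : a = 1 := by omega
    have h2 : b = 1 ∨ b = 2 := by omega
    subst h1
    rcases h2 with h | h <;> subst h <;> norm_num at hlt hlt2 ⊢ <;> norm_num [FF, GG]

lemma aux_GH : discoA GG HH := by
  constructor
  · intro a b hd
    obtain ⟨ha, hb, hlt⟩ := hd
    have ha' : 0 ≤ a ∧ a ≤ 2 := by simpa [GG, Set.mem_Icc] using ha
    have hb' : 0 ≤ b ∧ b ≤ 3 := by simpa [HH, Set.mem_Icc] using hb
    simp only [LGG, LHH] at hlt
    have h1 : a = 0 ∨ a = 1 ∨ a = 2 := by omega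
    have h2 : b = 0 ∨ b = 1 ∨ b = 2 ∨ b = 3 := by omega
    rcases h1 with h | h | h <;> rcases h2 with h' | h' | h' | h' <;> subst h <;> subst h' <;>
      revert hlt <;> norm_num [GG, HH]
  · intro a b hd hd'
    obtain ⟨ha, hb, hlt⟩ := hd
    obtain ⟨ha2, hb2, hlt2⟩ := hd'
    have ha' : 0 ≤ a ∧ a ≤ 2 := by simpa [GG, Set.mem_Icc] using ha
    have ha2' : 0 ≤ a - 1 ∧ a - 1 ≤ 2 := by simpa [GG, Set.mem_Icc] using ha2
    have hb' : 0 ≤ b ∧ b ≤ 3 := by simpa [HH, Set.mem_Icc] using hb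
    have hb2' : 0 ≤ b - 1 ∧ b - 1 ≤ 3 := by simpa [HH, Set.mem_Icc] using hb2
    simp only [LGG, LHH] at hlt hlt2
    have h1 : a = 1 ∨ a = 2 := by omega
    have h2 : b = 1 ∨ b = 2 ∨ b = 3 := by omega
    rcases h1 with h | h <;> rcases h2 with h' | h' | h' <;> subst h <;> subst h' <;>
      revert hlt hlt2 <;> norm_num [GG, HH]

lemma aux_FH : ¬ discoA FF HH := by
  intro ⟨_, h2⟩
  have hd1 : DRel FF HH 1 2 := by
    refine ⟨by simp [FF, Set.mem_Icc], by simp [HH, Set.mem_Icc], ?_⟩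
    simp only [LFF, LHH]
    norm_num
  have hd2 : DRel FF HH (1 - 1) (2 - 1) := by
    refine ⟨by simp [FF, Set.mem_Icc], by simp [HH, Set.mem_Icc], ?_⟩
    simp only [LFF, LHH]
    norm_num
  have := h2 1 2 hd1 hd2
  norm_num [FF, HH] at this

/-- The ∧-discrete dispersive order is not transitive: there are finitely
supported discrete distributions `F ≼_∧ G ≼_∧ H` with `F ⋠_∧ H`. -/
theorem stmt_8 : ∃ F G H : DiscDist,
    F.A.Finite ∧ G.A.Finite ∧ H.A.Finite ∧
    discoA F G ∧ discoA G H ∧ ¬ discoA F H := by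
  exact ⟨FF, GG, HH, Set.finite_Icc 0 1, Set.finite_Icc 0 2, Set.finite_Icc 0 3,
    aux_FG, aux_GH, aux_FH⟩
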